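/- Identify F_9 with F_3[α]/(α² + 2α + 2) and set y = α + 1. The permutation f' of F_9 defined by f'(0) = 1, f'(1) = 0, f'(−1) = y⁻¹, f'(y) = −1, and f'(x) = x⁻¹ for all other x is an AP-destroying permutation of F_9. -/

import Mathlib

open Polynomial

/-- The polynomial `α² + 2α + 2` over `F_3`, so that `F_9 = F_3[α]/(α² + 2α + 2)`. -/
noncomputable def f9Poly : Polynomial (ZMod 3) := X ^ 2 + 2 * X + 2

lemma f9_monic : f9Poly.Monic := by unfold f9Poly; monicity!
lemma f9_degree : f9Poly.degree = 2 := by unfold f9Poly; compute_degree!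

lemma F9.three_eq_zero : (3 : AdjoinRoot f9Poly) = 0 := by
  have h := map_natCast (algebraMap (ZMod 3) (AdjoinRoot f9Poly)) 3
  have : ((3:ℕ) : ZMod 3) = 0 := by decide
  rw [this, map_zero] at h
  exact_mod_cast h.symm

lemma F9.root_sq : (AdjoinRoot.root f9Poly) ^ 2 = AdjoinRoot.root f9Poly + 1 := by
  have h : AdjoinRoot.mk f9Poly (X ^ 2 + 2 * X + 2 : Polynomial (ZMod 3)) = 0 :=
    AdjoinRoot.mk_self
  simp only [map_add, map_mul, map_pow, AdjoinRoot.mk_X, map_ofNat] at h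
  linear_combination h - (AdjoinRoot.root f9Poly + 1) * F9.three_eq_zero

noncomputable def F9.phi (p : ZMod 3 × ZMod 3) : AdjoinRoot f9Poly :=
  AdjoinRoot.of f9Poly p.1 + AdjoinRoot.of f9Poly p.2 * AdjoinRoot.root f9Poly

namespace F9

lemma phi_aux (a b : ZMod 3)
    (h : AdjoinRoot.of f9Poly a + AdjoinRoot.of f9Poly b * AdjoinRoot.root f9Poly = 0) :
    a = 0 ∧ b = 0 := by
  have hm : AdjoinRoot.mk f9Poly (C a + C b * X) = 0 := by
    simpa [map_add, map_mul, AdjoinRoot.mk_X, AdjoinRoot.mk_C] using h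
  rw [AdjoinRoot.mk_eq_zero] at hm
  by_cases hp : (C a + C b * X : Polynomial (ZMod 3)) = 0
  · constructor
    · have := congrArg (fun q => coeff q 0) hp
      simpa using this
    · have := congrArg (fun q => coeff q 1) hp
      simpa using this
  · exfalso
    have hd := Polynomial.degree_le_of_dvd hm hp
    have h1 : (C a + C b * X : Polynomial (ZMod 3)).degree ≤ 1 := by compute_degree
    rw [f9_degree] at hd
    have := hd.trans h1
    norm_num at this

lemma phi_injective : Function.Injective phi := by
  rintro ⟨a, b⟩ ⟨c, d⟩ h
  have h0 : AdjoinRoot.of f9Poly (a - c) + AdjoinRoot.of f9Poly (b - d) * AdjoinRoot.root f9Poly = 0 := by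
    simp only [map_sub]
    simp only [phi] at h
    ring_nf
    linear_combination h
  obtain ⟨h1, h2⟩ := phi_aux _ _ h0
  have ha : a = c := by linear_combination h1
  have hb : b = d := by linear_combination h2
  simp_all

lemma phi_surjective : Function.Surjective phi := by
  intro x
  obtain ⟨p, rfl⟩ := AdjoinRoot.mk_surjective x
  refine ⟨((p %ₘ f9Poly).coeff 0, (p %ₘ f9Poly).coeff 1), ?_⟩
  have hdeg : (p %ₘ f9Poly).degree < 2 := by
    have := Polynomial.degree_modByMonic_lt p f9_monic
    rwa [f9_degree] at this
  have hle : (p %ₘ f9Poly).degree ≤ 1 := by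
    rcases eq_or_ne (p %ₘ f9Poly) 0 with h0 | h0
    · rw [h0]; simp
    · have h1 : (p %ₘ f9Poly).degree < ((2:ℕ) : WithBot ℕ) := by exact_mod_cast hdeg
      have := (Polynomial.natDegree_lt_iff_degree_lt h0).mpr h1
      have h2 : (p %ₘ f9Poly).natDegree ≤ 1 := by omega
      exact_mod_cast Polynomial.degree_le_of_natDegree_le h2
  have heq := Polynomial.eq_X_add_C_of_degree_le_one hle
  have hmod : AdjoinRoot.mk f9Poly (p %ₘ f9Poly) = AdjoinRoot.mk f9Poly p := by
    rw [Polynomial.modByMonic_eq_sub_mul_div p f9Poly]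
    simp [map_sub, map_mul, AdjoinRoot.mk_self]
  rw [← hmod]
  conv_rhs => rw [heq]
  simp only [phi, map_add, map_mul, AdjoinRoot.mk_X, AdjoinRoot.mk_C]
  ring

lemma phi_mul (p q : ZMod 3 × ZMod 3) :
    phi p * phi q = phi (p.1 * q.1 + p.2 * q.2, p.1 * q.2 + p.2 * q.1 + p.2 * q.2) := by
  simp only [phi, map_add, map_mul]
  linear_combination (AdjoinRoot.of f9Poly p.2 * AdjoinRoot.of f9Poly q.2) * F9.root_sq

lemma phi_sub (p q : ZMod 3 × ZMod 3) : phi p - phi q = phi (p - q) := by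
  simp only [phi, Prod.fst_sub, Prod.snd_sub, map_sub]
  ring

lemma phi_zero : phi (0, 0) = 0 := by simp [phi]
lemma phi_one : phi (1, 0) = 1 := by simp [phi]
lemma phi_neg_one : phi (2, 0) = -1 := by
  have h2 : ((2 : ZMod 3)) = -1 := by decide
  simp [phi, h2]

/-- The permutation `f'` as a table on coefficient pairs. -/
def g : ZMod 3 × ZMod 3 → ZMod 3 × ZMod 3 := fun p =>
  if p = (0,0) then (1,0) else if p = (1,0) then (0,0) else if p = (2,0) then (2,2)
  else if p = (0,1) then (2,1) else if p = (1,1) then (2,0) else if p = (2,1) then (0,1)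
  else if p = (0,2) then (1,2) else if p = (1,2) then (0,2) else (1,1)

/-- The inversion map of `F_9` as a table on coefficient pairs. -/
def tinv : ZMod 3 × ZMod 3 → ZMod 3 × ZMod 3 := fun p =>
  if p = (0,1) then (2,1) else if p = (1,1) then (2,2) else if p = (2,1) then (0,1)
  else if p = (0,2) then (1,2) else if p = (1,2) then (0,2) else if p = (2,2) then (1,1)
  else p

lemma inv_fact [Fact (Irreducible f9Poly)] (p : ZMod 3 × ZMod 3) (hp : p ≠ (0,0)) :
    (phi p)⁻¹ = phi (tinv p) := by
  apply inv_eq_of_mul_eq_one_right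
  rw [phi_mul]
  rw [show (p.1 * (tinv p).1 + p.2 * (tinv p).2,
        p.1 * (tinv p).2 + p.2 * (tinv p).1 + p.2 * (tinv p).2) = ((1:ZMod 3), (0:ZMod 3)) by
      revert hp; revert p; decide]
  exact phi_one

end F9

/-- In `F_9 = F_3[α]/(α² + 2α + 2)` with `y = α + 1`, the permutation `f'` given by
`f' 0 = 1`, `f' 1 = 0`, `f' (-1) = y⁻¹`, `f' y = -1` and `f' x = x⁻¹` otherwise
is an AP-destroying permutation of `F_9`. -/
theorem ap_destroying_perm_of_F9
    [Fact (Irreducible f9Poly)] [DecidableEq (AdjoinRoot f9Poly)]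
    (y : AdjoinRoot f9Poly) (hy : y = AdjoinRoot.root f9Poly + 1)
    (f' : AdjoinRoot f9Poly → AdjoinRoot f9Poly)
    (hf' : ∀ x, f' x =
      if x = 0 then 1 else if x = 1 then 0 else if x = -1 then y⁻¹
      else if x = y then -1 else x⁻¹) :
    Function.Bijective f' ∧
      ∀ a b c : AdjoinRoot f9Poly, b - a = c - b → b - a ≠ 0 →
        f' b - f' a ≠ f' c - f' b := by
  open F9 in
  have hy1 : y = phi (1, 1) := by
    rw [hy]; simp only [phi, map_one]; ring
  have hyinv : (phi ((1:ZMod 3), (1:ZMod 3)))⁻¹ = phi (2, 2) := by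
    rw [inv_fact (1,1) (by decide)]
    rw [show tinv (1,1) = ((2:ZMod 3),(2:ZMod 3)) from by decide]
  have key : ∀ p, f' (phi p) = phi (g p) := by
    intro p
    rw [hf', hy1, hyinv, show (0 : AdjoinRoot f9Poly) = phi (0,0) from phi_zero.symm,
      show (-1 : AdjoinRoot f9Poly) = phi (2,0) from phi_neg_one.symm,
      show (1 : AdjoinRoot f9Poly) = phi (1,0) from phi_one.symm]
    simp only [phi_injective.eq_iff]
    split_ifs with h1 h2 h3 h4
    · rw [h1, show g (0,0) = ((1:ZMod 3),(0:ZMod 3)) from by decide]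
    · rw [h2, show g (1,0) = ((0:ZMod 3),(0:ZMod 3)) from by decide]
    · rw [h3, show g (2,0) = ((2:ZMod 3),(2:ZMod 3)) from by decide]
    · rw [h4, show g (1,1) = ((2:ZMod 3),(0:ZMod 3)) from by decide]
    · rw [inv_fact p h1]
      apply congrArg phi
      have hgt : ∀ q : ZMod 3 × ZMod 3,
          (q = (0,0) ∨ q = (1,0) ∨ q = (2,0) ∨ q = (1,1)) ∨ tinv q = g q := by decide
      rcases hgt p with (h | h | h | h) | h
      · exact absurd h h1
      · exact absurd h h2
      · exact absurd h h3
      · exact absurd h h4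
      · exact h
  have hginj : ∀ p q : ZMod 3 × ZMod 3, g p ≠ g q ∨ p = q := by decide
  have hinj : Function.Injective f' := by
    intro x1 x2 h
    obtain ⟨p, rfl⟩ := phi_surjective x1
    obtain ⟨q, rfl⟩ := phi_surjective x2
    rw [key, key] at h
    rcases hginj p q with hne | heq
    · exact absurd (phi_injective h) hne
    · rw [heq]
  have : Finite (AdjoinRoot f9Poly) := Finite.of_surjective phi phi_surjective
  refine ⟨Finite.injective_iff_bijective.mp hinj, ?_⟩
  have main : ∀ p q s : ZMod 3 × ZMod 3,
      (q - p ≠ s - q ∨ q - p = 0) ∨ g q - g p ≠ g s - g q := by decide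
  intro a b c h1 h2
  obtain ⟨p, rfl⟩ := phi_surjective a
  obtain ⟨q, rfl⟩ := phi_surjective b
  obtain ⟨s, rfl⟩ := phi_surjective c
  rw [phi_sub, phi_sub] at h1
  have h1' : q - p = s - q := phi_injective h1
  have h2' : q - p ≠ 0 := by
    intro h
    apply h2
    rw [phi_sub, h, show ((0 : ZMod 3 × ZMod 3)) = ((0:ZMod 3),(0:ZMod 3)) from rfl, phi_zero]
  rw [key, key, key, phi_sub, phi_sub]
  intro hcon
  rcases main p q s with (h | h) | h
  · exact h h1'
  · exact h2' h
  · exact h (phi_injective hcon)
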